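/- Assume the drift condition D(C,V,φ,b). Let m > 0, let B ⊆ E be measurable, let T := inf{ k ≥ 1 : X_{mk} ∈ B } (a stopping time for the discrete filtration (ℱ_{mk})_{k∈ℕ}), and let N ∈ ℕ. Then E[ Σ_{k=1}^{T∧N} φ(V(X_{mk})) ] ≤ m^{-1} · E[ ∫₀^{m(T∧N)} φ(V(X_s)) ds ] + b·φ'(1)·m·E[T∧N]. -/

import Mathlib

open MeasureTheory Filter
open scoped ENNReal

section ConcaveHelpers
variable {φ φ' : ℝ → ℝ}

lemma drift_aux_tangent (hconc : ConcaveOn ℝ (Set.Ici 1) φ)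
    (hd : ∀ u ∈ Set.Ici (1:ℝ), HasDerivWithinAt φ (φ' u) (Set.Ici 1) u)
    {u v : ℝ} (hu : 1 ≤ u) (hv : 1 ≤ v) : φ v ≤ φ u + φ' u * (v - u) := by
  rcases lt_trichotomy u v with h | h | h
  · have hs := hconc.slope_le_of_hasDerivWithinAt hu hv h (hd u hu)
    rw [slope_def_field, div_le_iff₀ (by linarith : (0:ℝ) < v - u)] at hs
    linarith
  · subst h; simp
  · have hs := hconc.le_slope_of_hasDerivWithinAt hv hu h (hd u hu)
    rw [slope_def_field, le_div_iff₀ (by linarith : (0:ℝ) < u - v)] at hs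
    nlinarith

lemma drift_aux_anti (hconc : ConcaveOn ℝ (Set.Ici 1) φ)
    (hd : ∀ u ∈ Set.Ici (1:ℝ), HasDerivWithinAt φ (φ' u) (Set.Ici 1) u) :
    AntitoneOn φ' (Set.Ici 1) := by
  intro u hu v hv huv
  rcases eq_or_lt_of_le huv with rfl | h
  · exact le_rfl
  · calc φ' v ≤ slope φ u v := hconc.le_slope_of_hasDerivWithinAt hu hv h (hd v hv)
      _ ≤ φ' u := hconc.slope_le_of_hasDerivWithinAt hu hv h (hd u hu)

lemma drift_aux_nonneg (hmono : MonotoneOn φ (Set.Ici 1))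
    (hconc : ConcaveOn ℝ (Set.Ici 1) φ)
    (hd : ∀ u ∈ Set.Ici (1:ℝ), HasDerivWithinAt φ (φ' u) (Set.Ici 1) u)
    {u : ℝ} (hu : 1 ≤ u) : 0 ≤ φ' u := by
  have h2 : (u + 1) ∈ Set.Ici (1:ℝ) := by simp only [Set.mem_Ici]; linarith
  have hs := hconc.slope_le_of_hasDerivWithinAt hu h2 (by linarith) (hd u hu)
  rw [slope_def_field] at hs
  have h3 : 0 ≤ φ (u+1) - φ u := sub_nonneg.2 (hmono hu h2 (by linarith))
  have h4 : (0:ℝ) ≤ (φ (u+1) - φ u) / (u + 1 - u) := by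
    apply div_nonneg h3; linarith
  linarith

end ConcaveHelpers

lemma drift_aux_joint {Ω E : Type*} [MeasurableSpace Ω] [MeasurableSpace E]
    (μ : Measure Ω) [SFinite μ] (X : ℝ → Ω → E) (V : E → ℝ)
    (hXmeas : ∀ t : ℝ, 0 ≤ t → Measurable (X t)) (hV_meas : Measurable V)
    (hVX_rc : ∀ ω : Ω, ∀ t : ℝ, 0 ≤ t →
      Tendsto (fun s => V (X s ω)) (nhdsWithin t (Set.Ici t)) (nhds (V (X t ω))))
    (I : Set ℝ) (hImeas : MeasurableSet I) (hIpos : I ⊆ Set.Ici 0) :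
    AEStronglyMeasurable (fun p : ℝ × Ω => V (X p.1 p.2)) ((volume.restrict I).prod μ) := by
  set f : ℕ → ℝ × Ω → ℝ :=
    fun n p => V (X (max (((⌊p.1 * 2^n⌋ : ℤ) + 1 : ℝ) / 2^n) 0) p.2) with hf
  have hfmeas : ∀ n, Measurable (f n) := by
    intro n
    have h1 : Measurable fun q : Ω × ℤ => V (X (max (((q.2 : ℝ) + 1) / 2^n) 0) q.1) := by
      apply measurable_from_prod_countable_left
      intro z
      show Measurable fun ω : Ω => V (X (((z:ℝ)+1)/2^n ⊔ 0) ω)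
      exact hV_meas.comp (hXmeas _ (le_max_right _ _))
    have h2 : Measurable fun p : ℝ × Ω => (p.2, (⌊p.1 * 2^n⌋ : ℤ)) :=
      measurable_snd.prodMk (Int.measurable_floor.comp (measurable_fst.mul measurable_const))
    exact h1.comp h2
  have hconv : ∀ p : ℝ × Ω, 0 ≤ p.1 →
      Tendsto (fun n => f n p) atTop (nhds (V (X p.1 p.2))) := by
    rintro ⟨s, ω⟩ hs
    have hpos : ∀ n : ℕ, (0:ℝ) ≤ ((⌊s * 2^n⌋ : ℤ) + 1 : ℝ) / 2^n := by
      intro n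
      apply div_nonneg _ (by positivity)
      have h0 : (0:ℤ) ≤ ⌊s * 2^n⌋ := Int.floor_nonneg.2 (by positivity)
      have h0' : (0:ℝ) ≤ ((⌊s * 2^n⌋ : ℤ) : ℝ) := by exact_mod_cast h0
      linarith
    have hseq : ∀ n : ℕ, f n (s, ω) = V (X (((⌊s * 2^n⌋ : ℤ) + 1 : ℝ) / 2^n) ω) := by
      intro n
      simp only [hf]
      rw [max_eq_left (hpos n)]
    have hlb : ∀ n : ℕ, s ≤ ((⌊s * 2^n⌋ : ℤ) + 1 : ℝ) / 2^n := by
      intro n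
      rw [le_div_iff₀ (by positivity : (0:ℝ) < 2^n)]
      have := Int.lt_floor_add_one (s * 2^n)
      linarith
    have hub : ∀ n : ℕ, ((⌊s * 2^n⌋ : ℤ) + 1 : ℝ) / 2^n ≤ s + 1/2^n := by
      intro n
      rw [div_le_iff₀ (by positivity : (0:ℝ) < 2^n)]
      have := Int.floor_le (s * 2^n)
      have h2 : (s + 1/2^n) * 2^n = s * 2^n + 1 := by
        field_simp
      rw [h2]; linarith
    have htt : Tendsto (fun n : ℕ => ((⌊s * 2^n⌋ : ℤ) + 1 : ℝ) / 2^n) atTop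
        (nhdsWithin s (Set.Ici s)) := by
      rw [tendsto_nhdsWithin_iff]
      constructor
      · have hup : Tendsto (fun n : ℕ => s + 1/2^n) atTop (nhds s) := by
          have h1 : Tendsto (fun n : ℕ => (1:ℝ)/2^n) atTop (nhds 0) := by
            simpa [one_div, inv_pow] using
              tendsto_pow_atTop_nhds_zero_of_lt_one (by norm_num : (0:ℝ) ≤ 2⁻¹)
                (by norm_num : (2:ℝ)⁻¹ < 1)
          simpa using tendsto_const_nhds.add h1
        exact tendsto_of_tendsto_of_tendsto_of_le_of_le tendsto_const_nhds hup hlb hub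
      · exact Eventually.of_forall fun n => hlb n
    have hcomp := (hVX_rc ω s hs).comp htt
    refine Tendsto.congr (fun n => (hseq n).symm) hcomp
  have hae : ∀ᵐ p ∂((volume.restrict I).prod μ),
      Tendsto (fun n => f n p) atTop (nhds (V (X p.1 p.2))) := by
    have hset : ((volume.restrict I).prod μ) {p : ℝ × Ω | ¬ (0:ℝ) ≤ p.1} = 0 := by
      have hrw : {p : ℝ × Ω | ¬ (0:ℝ) ≤ p.1} = (Set.Iio 0) ×ˢ Set.univ := by
        ext p; simp [not_le]
      rw [hrw, Measure.prod_prod, Measure.restrict_apply measurableSet_Iio]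
      have hempty : Set.Iio (0:ℝ) ∩ I = ∅ := by
        ext u; simp only [Set.mem_inter_iff, Set.mem_Iio, Set.mem_empty_iff_false, iff_false,
          not_and]
        intro hu hI
        exact absurd (hIpos hI) (not_le.2 hu)
      simp [hempty]
    have h0 : ∀ᵐ p ∂((volume.restrict I).prod μ), (0:ℝ) ≤ p.1 := by
      rw [ae_iff]; exact hset
    filter_upwards [h0] with p hp using hconv p hp
  exact aestronglyMeasurable_of_tendsto_ae atTop
    (fun n => (hfmeas n).aestronglyMeasurable) hae

set_option maxHeartbeats 4000000 in
/-- Under the drift condition `D(C,V,φ,b)`, for `m > 0`, a measurable set `B`, the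
return time `T = inf{k ≥ 1 : X_{mk} ∈ B}` of the `m`-skeleton, and `N ∈ ℕ`,
`E[Σ_{k=1}^{T∧N} φ(V(X_{mk}))] ≤ m⁻¹ E[∫₀^{m(T∧N)} φ(V(X_s)) ds] + b φ'(1) m E[T∧N]`. -/
theorem drift_condition_skeleton_modulated_moment
    {Ω E : Type*} [MeasurableSpace Ω] [MeasurableSpace E]
    (μ : Measure Ω) [IsProbabilityMeasure μ]
    (ℱ : ℝ → MeasurableSpace Ω)
    (hℱ_mono : ∀ s t : ℝ, s ≤ t → ℱ s ≤ ℱ t)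
    (hℱ_le : ∀ t : ℝ, ℱ t ≤ ‹MeasurableSpace Ω›)
    (X : ℝ → Ω → E)
    (hX_adapted : ∀ t : ℝ, 0 ≤ t → Measurable[ℱ t] (X t))
    (x : E) (hX0 : ∀ᵐ ω ∂μ, X 0 ω = x)
    (C : Set E) (hC : MeasurableSet C)
    (V : E → ℝ) (hV_meas : Measurable V) (hV_one : ∀ y : E, 1 ≤ V y)
    (hVX_rc : ∀ ω : Ω, ∀ t : ℝ, 0 ≤ t →
      Tendsto (fun s => V (X s ω)) (nhdsWithin t (Set.Ici t)) (nhds (V (X t ω))))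
    (hVX_ll : ∀ ω : Ω, ∀ t : ℝ, 0 < t →
      ∃ l : ℝ, Tendsto (fun s => V (X s ω)) (nhdsWithin t (Set.Iio t)) (nhds l))
    (φ φ' : ℝ → ℝ)
    (hφ_pos : ∀ u : ℝ, 1 ≤ u → 0 < φ u)
    (hφ_mono : MonotoneOn φ (Set.Ici 1))
    (hφ_conc : ConcaveOn ℝ (Set.Ici 1) φ)
    (hφ_deriv : ∀ u ∈ Set.Ici (1:ℝ), HasDerivWithinAt φ (φ' u) (Set.Ici 1) u)
    (b : ℝ) (hb : 0 ≤ b)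
    (Mdrift : ℝ → Ω → ℝ)
    (hM_def : ∀ t : ℝ, ∀ ω : Ω, Mdrift t ω =
      V (X t ω) - V (X 0 ω) + (∫ u in (0:ℝ)..t, φ (V (X u ω)))
        - b * ∫ u in (0:ℝ)..t, C.indicator (fun _ => (1:ℝ)) (X u ω))
    (hV_int : ∀ t : ℝ, 0 ≤ t → Integrable (fun ω => V (X t ω)) μ)
    (hM_int : ∀ t : ℝ, 0 ≤ t → Integrable (Mdrift t) μ)
    (hM_adapted : ∀ t : ℝ, 0 ≤ t → Measurable[ℱ t] (Mdrift t))
    (hM_super : ∀ s t : ℝ, 0 ≤ s → s ≤ t → μ[Mdrift t|ℱ s] ≤ᵐ[μ] Mdrift s)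
    (m : ℝ) (hm : 0 < m)
    (B : Set E) (hB : MeasurableSet B)
    (N : ℕ)
    (TN : Ω → ℕ)
    (hTN_def : ∀ ω : Ω, TN ω = sInf ({k : ℕ | 1 ≤ k ∧ X (m * k) ω ∈ B} ∪ {N})) :
    (∫ ω, (∑ k ∈ Finset.Icc 1 (TN ω), φ (V (X (m * k) ω))) ∂μ)
      ≤ m⁻¹ * (∫ ω, (∫ s in (0:ℝ)..(m * (TN ω : ℝ)), φ (V (X s ω))) ∂μ)
        + b * φ' 1 * m * ∫ ω, ((TN ω : ℝ)) ∂μ := by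
  classical
  have hXmeas : ∀ t : ℝ, 0 ≤ t → Measurable (X t) :=
    fun t ht => (hX_adapted t ht).mono (hℱ_le t) le_rfl
  have htan : ∀ {u v : ℝ}, 1 ≤ u → 1 ≤ v → φ v ≤ φ u + φ' u * (v - u) :=
    fun hu hv => drift_aux_tangent hφ_conc hφ_deriv hu hv
  have hanti := drift_aux_anti hφ_conc hφ_deriv
  have hφ'nonneg : ∀ {u : ℝ}, 1 ≤ u → 0 ≤ φ' u :=
    fun hu => drift_aux_nonneg hφ_mono hφ_conc hφ_deriv hu
  have hφ'le : ∀ {u : ℝ}, 1 ≤ u → φ' u ≤ φ' 1 :=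
    fun {u} hu => hanti (Set.mem_Ici.2 le_rfl) (Set.mem_Ici.2 hu) hu
  have hφcontOn : ContinuousOn φ (Set.Ici 1) := fun u hu => (hφ_deriv u hu).continuousWithinAt
  have hψcont : Continuous fun u : ℝ => φ (max u 1) :=
    hφcontOn.comp_continuous (continuous_id.max continuous_const) fun u => Set.mem_Ici.2 (le_max_right _ _)
  have hφV_pos : ∀ y : E, 0 < φ (V y) := fun y => hφ_pos _ (hV_one y)
  have hφV_meas : ∀ t : ℝ, 0 ≤ t → Measurable fun ω => φ (V (X t ω)) := by
    intro t ht
    have heq : (fun ω => φ (V (X t ω))) = fun ω => φ (max (V (X t ω)) 1) := by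
      funext ω; rw [max_eq_left (hV_one _)]
    rw [heq]
    have hm0 : Measurable fun ω => V (X t ω) := hV_meas.comp (hXmeas t ht)
    exact hψcont.measurable.comp hm0
  have hφV_int : ∀ t : ℝ, 0 ≤ t → Integrable (fun ω => φ (V (X t ω))) μ := by
    intro t ht
    refine Integrable.mono' ((integrable_const (φ 1)).add
      (((hV_int t ht).sub (integrable_const 1)).const_mul (φ' 1)))
      (hφV_meas t ht).aestronglyMeasurable (Eventually.of_forall fun ω => ?_)
    rw [Real.norm_eq_abs, abs_of_pos (hφV_pos _)]
    simpa using htan le_rfl (hV_one (X t ω))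
  -- indicator elementary bounds
  have hind01 : ∀ y : E, 0 ≤ C.indicator (fun _ => (1:ℝ)) y ∧ C.indicator (fun _ => (1:ℝ)) y ≤ 1 :=
    fun y => ⟨Set.indicator_nonneg (fun _ _ => zero_le_one) _,
      Set.indicator_apply_le' (fun _ => le_rfl) fun _ => zero_le_one⟩
  have hind_nonneg : ∀ (ω : Ω) (s : ℝ), 0 ≤ s →
      0 ≤ ∫ u in (0:ℝ)..s, C.indicator (fun _ => (1:ℝ)) (X u ω) :=
    fun ω s hs => intervalIntegral.integral_nonneg hs fun u _ => (hind01 _).1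
  have hinddiff : ∀ (ω : Ω) (s t : ℝ), 0 ≤ s → s ≤ t →
      (∫ u in (0:ℝ)..t, C.indicator (fun _ => (1:ℝ)) (X u ω))
        - (∫ u in (0:ℝ)..s, C.indicator (fun _ => (1:ℝ)) (X u ω)) ≤ t - s := by
    intro ω s t hs hst
    by_cases hI : IntervalIntegrable (fun u => C.indicator (fun _ => (1:ℝ)) (X u ω)) volume 0 t
    · have hsub1 : Set.uIcc (0:ℝ) s ⊆ Set.uIcc (0:ℝ) t := by
        rw [Set.uIcc_of_le hs, Set.uIcc_of_le (hs.trans hst)]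
        exact Set.Icc_subset_Icc le_rfl hst
      have hsub2 : Set.uIcc s t ⊆ Set.uIcc (0:ℝ) t := by
        rw [Set.uIcc_of_le hst, Set.uIcc_of_le (hs.trans hst)]
        exact Set.Icc_subset_Icc hs le_rfl
      have hI1 := hI.mono_set hsub1
      have hI2 := hI.mono_set hsub2
      rw [← intervalIntegral.integral_add_adjacent_intervals hI1 hI2]
      have hle : (∫ u in s..t, C.indicator (fun _ => (1:ℝ)) (X u ω)) ≤ ∫ _u in s..t, (1:ℝ) :=
        intervalIntegral.integral_mono_on hst hI2 intervalIntegrable_const fun u _ => (hind01 _).2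
      rw [intervalIntegral.integral_const, smul_eq_mul, mul_one] at hle
      linarith
    · rw [intervalIntegral.integral_undef hI]
      have := hind_nonneg ω s hs
      linarith
  -- expectation bounds from the supermartingale property
  have hM0 : ∀ ω, Mdrift 0 ω = 0 := by
    intro ω; rw [hM_def]; simp
  have hEM : ∀ t : ℝ, 0 ≤ t → (∫ ω, Mdrift t ω ∂μ) ≤ 0 := by
    intro t ht
    have h2 : (∫ ω, (μ[Mdrift t|ℱ 0]) ω ∂μ) = ∫ ω, Mdrift t ω ∂μ :=
      integral_condExp (hℱ_le 0)
    have h3 : (∫ ω, (μ[Mdrift t|ℱ 0]) ω ∂μ) ≤ ∫ ω, Mdrift 0 ω ∂μ :=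
      integral_mono_ae integrable_condExp (hM_int 0 le_rfl) (hM_super 0 t le_rfl ht)
    have h4 : (∫ ω, Mdrift 0 ω ∂μ) = 0 := by simp [hM0]
    linarith
  have hEV : ∀ t : ℝ, 0 ≤ t → (∫ ω, V (X t ω) ∂μ) ≤ V x + b * t := by
    intro t ht
    have hWle : ∀ ω, V (X t ω) - V (X 0 ω) - Mdrift t ω ≤ b * t := by
      intro ω
      rw [hM_def]
      have h1 : 0 ≤ ∫ u in (0:ℝ)..t, φ (V (X u ω)) :=
        intervalIntegral.integral_nonneg ht fun u _ => (hφV_pos _).le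
      have h2 := hinddiff ω 0 t le_rfl ht
      have h2' : (∫ u in (0:ℝ)..t, C.indicator (fun _ => (1:ℝ)) (X u ω)) ≤ t := by
        simpa using h2
      nlinarith [mul_le_mul_of_nonneg_left h2' hb]
    have hW_int : Integrable (fun ω => V (X t ω) - V (X 0 ω) - Mdrift t ω) μ :=
      ((hV_int t ht).sub (hV_int 0 le_rfl)).sub (hM_int t ht)
    have hsplit : (∫ ω, V (X t ω) ∂μ) = ((∫ ω, Mdrift t ω ∂μ) + (∫ ω, V (X 0 ω) ∂μ))
        + ∫ ω, (V (X t ω) - V (X 0 ω) - Mdrift t ω) ∂μ := by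
      have hfe : (fun ω => V (X t ω))
          = fun ω => (Mdrift t ω + V (X 0 ω)) + (V (X t ω) - V (X 0 ω) - Mdrift t ω) := by
        funext ω; ring
      have hMV : Integrable (fun ω => Mdrift t ω + V (X 0 ω)) μ :=
        (hM_int t ht).add (hV_int 0 le_rfl)
      rw [hfe, integral_add hMV hW_int, integral_add (hM_int t ht) (hV_int 0 le_rfl)]
    have hEV0 : (∫ ω, V (X 0 ω) ∂μ) = V x := by
      have hc : (fun ω => V (X 0 ω)) =ᵐ[μ] fun _ => V x := hX0.mono fun ω h => by
        show V (X 0 ω) = V x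
        rw [h]
      rw [integral_congr_ae hc]; simp
    have hEW : (∫ ω, (V (X t ω) - V (X 0 ω) - Mdrift t ω) ∂μ) ≤ b * t := by
      calc (∫ ω, (V (X t ω) - V (X 0 ω) - Mdrift t ω) ∂μ)
          ≤ ∫ _ω, b * t ∂μ :=
            integral_mono_ae hW_int (integrable_const _) (Eventually.of_forall hWle)
        _ = b * t := by simp
    have := hEM t ht
    rw [hsplit, hEV0]
    linarith
  -- joint measurability and product integrability
  have hjoint : ∀ I : Set ℝ, MeasurableSet I → I ⊆ Set.Ici 0 →
      AEStronglyMeasurable (fun p : ℝ × Ω => φ (V (X p.1 p.2))) ((volume.restrict I).prod μ) := by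
    intro I hImeas hIpos
    have h := drift_aux_joint μ X V hXmeas hV_meas hVX_rc I hImeas hIpos
    have heq : (fun p : ℝ × Ω => φ (V (X p.1 p.2)))
        = (fun u => φ (max u 1)) ∘ fun p : ℝ × Ω => V (X p.1 p.2) := by
      funext p; simp [Function.comp, max_eq_left (hV_one _)]
    rw [heq]
    exact hψcont.comp_aestronglyMeasurable h
  set J : Set ℝ := Set.Icc 0 (m * N) with hJ
  have hprod : ∀ I : Set ℝ, MeasurableSet I → I ⊆ J →
      Integrable (fun p : ℝ × Ω => φ (V (X p.1 p.2))) ((volume.restrict I).prod μ) := by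
    intro I hIm hIJ
    have hIpos : I ⊆ Set.Ici 0 := fun s hs => (hIJ hs).1
    have hmeasF := hjoint I hIm hIpos
    rw [integrable_prod_iff hmeasF]
    refine ⟨?_, ?_⟩
    · filter_upwards [ae_restrict_mem hIm] with s hs
      exact hφV_int s (hIpos hs)
    · have hIfin : volume I < ⊤ :=
        lt_of_le_of_lt (measure_mono hIJ) (by rw [Real.volume_Icc]; exact ENNReal.ofReal_lt_top)
      refine Integrable.mono'
        (integrableOn_const hIfin.ne :
          IntegrableOn (fun _ => φ 1 + φ' 1 * (V x + b * (m * N) - 1)) I volume)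
        hmeasF.norm.integral_prod_right' ?_
      filter_upwards [ae_restrict_mem hIm] with s hs
      have hs0 : (0:ℝ) ≤ s := hIpos hs
      have hsN : s ≤ m * N := (hIJ hs).2
      rw [Real.norm_eq_abs, abs_of_nonneg (integral_nonneg fun ω => norm_nonneg _)]
      have hcalc : (∫ ω, ‖φ (V (X s ω))‖ ∂μ) = ∫ ω, φ (V (X s ω)) ∂μ := by
        congr 1; funext ω; rw [Real.norm_eq_abs, abs_of_pos (hφV_pos _)]
      rw [hcalc]
      have hVm1 : Integrable (fun ω => V (X s ω) - 1) μ :=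
        (hV_int s hs0).sub (integrable_const 1)
      have hg2 : Integrable (fun ω => φ' 1 * (V (X s ω) - 1)) μ := hVm1.const_mul _
      have hb1 : (∫ ω, φ (V (X s ω)) ∂μ) ≤ ∫ ω, (φ 1 + φ' 1 * (V (X s ω) - 1)) ∂μ :=
        integral_mono_ae (hφV_int s hs0)
          ((integrable_const _).add hg2)
          (Eventually.of_forall fun ω => htan le_rfl (hV_one _))
      have hb2 : (∫ ω, (φ 1 + φ' 1 * (V (X s ω) - 1)) ∂μ)
          = φ 1 + φ' 1 * ((∫ ω, V (X s ω) ∂μ) - 1) := by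
        rw [integral_add (integrable_const _) hg2,
          integral_const, integral_const_mul, integral_sub (hV_int s hs0) (integrable_const 1),
          integral_const]
        simp [measure_univ]
      have hEVs := hEV s hs0
      have hbs : b * s ≤ b * (m * N) := mul_le_mul_of_nonneg_left hsN hb
      have hnn : (0:ℝ) ≤ φ' 1 := hφ'nonneg le_rfl
      rw [hb2] at hb1
      nlinarith
  have hpath : ∀ᵐ ω ∂μ, IntegrableOn (fun s => φ (V (X s ω))) J volume :=
    (hprod J measurableSet_Icc (subset_refl J)).prod_left_ae
  -- stopping time facts
  have hTN_le : ∀ ω, TN ω ≤ N := fun ω => by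
    rw [hTN_def]; exact Nat.sInf_le (Or.inr rfl)
  have hTN_iff : ∀ (k : ℕ) (ω : Ω),
      k ≤ TN ω ↔ k ≤ N ∧ ∀ j : ℕ, 1 ≤ j → j < k → X (m * j) ω ∉ B := by
    intro k ω
    rw [hTN_def]
    constructor
    · intro h
      refine ⟨h.trans (Nat.sInf_le (Or.inr rfl)), fun j h1 hjk hXB => ?_⟩
      have hle := Nat.sInf_le (s := {k : ℕ | 1 ≤ k ∧ X (m * k) ω ∈ B} ∪ {N}) (Or.inl ⟨h1, hXB⟩)
      omega
    · rintro ⟨hkN, hno⟩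
      apply le_csInf ⟨N, Or.inr rfl⟩
      rintro j (⟨h1, hXB⟩ | rfl)
      · by_contra hlt
        push_neg at hlt
        exact hno j h1 hlt hXB
      · exact hkN
  have hA_ms : ∀ k : ℕ, 1 ≤ k → MeasurableSet[ℱ (m * ((k:ℝ) - 1))] {ω | k ≤ TN ω} := by
    intro k hk
    have hset : {ω | k ≤ TN ω}
        = {ω : Ω | k ≤ N} ∩ ⋂ j ∈ Finset.Ico 1 k, (X (m * (j : ℕ))) ⁻¹' Bᶜ := by
      ext ω
      simp only [Set.mem_setOf_eq, Set.mem_inter_iff, Set.mem_iInter, Finset.mem_Ico,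
        Set.mem_preimage, Set.mem_compl_iff, hTN_iff]
      constructor
      · rintro ⟨h1, h2⟩; exact ⟨h1, fun j hj => h2 j hj.1 hj.2⟩
      · rintro ⟨h1, h2⟩; exact ⟨h1, fun j hj1 hj2 => h2 j ⟨hj1, hj2⟩⟩
    rw [hset]
    apply MeasurableSet.inter
    · exact MeasurableSet.const _
    · refine MeasurableSet.iInter fun j => MeasurableSet.iInter fun hj => ?_
      simp only [Finset.mem_Ico] at hj
      have hj0 : (0:ℝ) ≤ m * (j:ℕ) := by positivity
      have hjk : m * ((j:ℕ):ℝ) ≤ m * ((k:ℝ) - 1) := by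
        apply mul_le_mul_of_nonneg_left _ hm.le
        have hcast : ((j:ℕ):ℝ) + 1 ≤ (k:ℝ) := by exact_mod_cast Nat.succ_le_of_lt hj.2
        linarith
      exact hℱ_mono _ _ hjk _ ((hX_adapted _ hj0) hB.compl)
  set Ain : ℕ → Ω → ℝ := fun k => Set.indicator {ω' | k ≤ TN ω'} (fun _ => (1:ℝ)) with hAin
  have hAin01 : ∀ (k : ℕ) (ω : Ω), 0 ≤ Ain k ω ∧ Ain k ω ≤ 1 := fun k ω =>
    ⟨Set.indicator_nonneg (fun _ _ => zero_le_one) _,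
     Set.indicator_apply_le' (fun _ => le_rfl) fun _ => zero_le_one⟩
  have hAin_meas : ∀ k : ℕ, 1 ≤ k → Measurable (Ain k) := fun k hk =>
    measurable_const.indicator (hℱ_le _ _ (hA_ms k hk))
  have hAin_int : ∀ k : ℕ, 1 ≤ k → Integrable (Ain k) μ := fun k hk =>
    (integrable_const (1:ℝ)).indicator (hℱ_le _ _ (hA_ms k hk))
  have hAin_if : ∀ (k : ℕ) (ω : Ω), Ain k ω = if k ≤ TN ω then (1:ℝ) else 0 := by
    intro k ω
    simp [hAin, Set.indicator_apply]
  have hfil : ∀ ω, (Finset.Icc 1 N).filter (fun k => k ≤ TN ω) = Finset.Icc 1 (TN ω) := by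
    intro ω
    ext j
    simp only [Finset.mem_filter, Finset.mem_Icc]
    have := hTN_le ω
    omega
  -- product integrability with indicator weight
  have hFkA : ∀ k : ℕ, 1 ≤ k → k ≤ N →
      Integrable (fun p : ℝ × Ω => Ain k p.2 * φ (V (X p.1 p.2)))
        ((volume.restrict (Set.Icc (m * ((k:ℝ) - 1)) (m * (k:ℝ)))).prod μ) := by
    intro k hk1 hkN
    have hk1R : (1:ℝ) ≤ (k:ℝ) := by exact_mod_cast hk1
    have hIk : Set.Icc (m * ((k:ℝ) - 1)) (m * (k:ℝ)) ⊆ J := by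
      intro s hs
      constructor
      · have : 0 ≤ m * ((k:ℝ) - 1) := mul_nonneg hm.le (by linarith)
        exact this.trans hs.1
      · have : m * (k:ℝ) ≤ m * (N:ℝ) :=
          mul_le_mul_of_nonneg_left (by exact_mod_cast hkN) hm.le
        exact hs.2.trans this
    refine (hprod _ measurableSet_Icc hIk).bdd_mul (c := 1) ?_ (Eventually.of_forall fun p => ?_)
    · exact ((hAin_meas k hk1).comp measurable_snd).aestronglyMeasurable
    · rw [Real.norm_eq_abs, abs_of_nonneg (hAin01 k _).1]; exact (hAin01 k _).2
  -- the key per-step estimate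
  have hkey : ∀ k : ℕ, 1 ≤ k → k ≤ N →
      m * (∫ ω, Ain k ω * φ (V (X (m * (k:ℝ)) ω)) ∂μ)
        ≤ (∫ ω, Ain k ω * (∫ s in Set.Icc (m * ((k:ℝ) - 1)) (m * (k:ℝ)), φ (V (X s ω))) ∂μ)
          + m * (φ' 1 * (b * m) * ∫ ω, Ain k ω ∂μ) := by
    intro k hk1 hkN
    have hk1R : (1:ℝ) ≤ (k:ℝ) := by exact_mod_cast hk1
    set t1 : ℝ := m * ((k:ℝ) - 1) with ht1
    set t2 : ℝ := m * (k:ℝ) with ht2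
    have ht10 : 0 ≤ t1 := mul_nonneg hm.le (by linarith)
    have ht12 : t1 ≤ t2 := by
      rw [ht1, ht2]; apply mul_le_mul_of_nonneg_left (by linarith) hm.le
    have ht2J : t2 ≤ m * N := mul_le_mul_of_nonneg_left (by exact_mod_cast hkN) hm.le
    have hIk : Set.Icc t1 t2 ⊆ J := fun s hs => ⟨ht10.trans hs.1, hs.2.trans ht2J⟩
    set A : Set Ω := {ω' | k ≤ TN ω'} with hA
    have hAml : MeasurableSet[ℱ t1] A := hA_ms k hk1
    have claimA : ∀ s ∈ Set.Icc t1 t2,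
        (∫ ω, Ain k ω * φ (V (X t2 ω)) ∂μ)
          ≤ (∫ ω, Ain k ω * φ (V (X s ω)) ∂μ) + φ' 1 * (b * m) * ∫ ω, Ain k ω ∂μ := by
      intro s hs
      have hs0 : 0 ≤ s := ht10.trans hs.1
      have hst2 : s ≤ t2 := hs.2
      have ht20 : 0 ≤ t2 := hs0.trans hst2
      set Z : Ω → ℝ := fun ω => V (X t2 ω) - V (X s ω) with hZ
      have hZint : Integrable Z μ := (hV_int t2 ht20).sub (hV_int s hs0)
      set R : Ω → ℝ := Mdrift t2 - Mdrift s + fun _ => b * m with hR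
      have hMdiff_int : Integrable (Mdrift t2 - Mdrift s) μ :=
        (hM_int t2 ht20).sub (hM_int s hs0)
      have hRint : Integrable R μ := hMdiff_int.add (integrable_const _)
      have hZR : Z ≤ᵐ[μ] R := by
        filter_upwards [hpath] with ω hω
        have hii : ∀ a c : ℝ, 0 ≤ a → a ≤ c → c ≤ m * N →
            IntervalIntegrable (fun u => φ (V (X u ω))) volume a c := by
          intro a c ha hac hc
          rw [intervalIntegrable_iff, Set.uIoc_of_le hac]
          exact hω.mono_set fun u hu => ⟨ha.trans hu.1.le, hu.2.trans hc⟩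
        have h1 := hii 0 s le_rfl hs0 (hst2.trans ht2J)
        have h2 := hii s t2 hs0 hst2 ht2J
        have hsplit := intervalIntegral.integral_add_adjacent_intervals h1 h2
        have h3 : 0 ≤ ∫ u in s..t2, φ (V (X u ω)) :=
          intervalIntegral.integral_nonneg hst2 fun u _ => (hφV_pos _).le
        have h4 := hinddiff ω s t2 hs0 hst2
        have hts : t2 - s ≤ m := by
          have := hs.1
          rw [ht1] at this
          rw [ht2]
          nlinarith
        have h5 : b * ((∫ u in (0:ℝ)..t2, C.indicator (fun _ => (1:ℝ)) (X u ω))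
            - ∫ u in (0:ℝ)..s, C.indicator (fun _ => (1:ℝ)) (X u ω)) ≤ b * m :=
          mul_le_mul_of_nonneg_left (h4.trans (by linarith)) hb
        show Z ω ≤ R ω
        simp only [hZ, hR, Pi.add_apply, Pi.sub_apply]
        rw [hM_def t2 ω, hM_def s ω]
        linarith [hsplit, h3, h5]
      have hMs_eq : μ[Mdrift s|ℱ s] = Mdrift s :=
        condExp_of_stronglyMeasurable (hℱ_le s)
          (Measurable.stronglyMeasurable (hM_adapted s hs0)) (hM_int s hs0)
      have hconst_eq : μ[(fun _ : Ω => b * m)|ℱ s] = fun _ => b * m :=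
        condExp_const (hℱ_le s) _
      have hcond : (μ[Z|ℱ s]) ≤ᵐ[μ] fun _ => b * m := by
        have hmono := condExp_mono (m := ℱ s) hZint hRint hZR
        have hadd := condExp_add (μ := μ) (m := ℱ s) hMdiff_int (integrable_const (b * m))
        have hsub := condExp_sub (μ := μ) (m := ℱ s) (hM_int t2 ht20) (hM_int s hs0)
        filter_upwards [hmono, hadd, hsub, hM_super s t2 hs0 hst2] with ω e1 e2 e3 e4
        have e5 := congrFun hMs_eq ω
        have e6 := congrFun hconst_eq ω
        show (μ[Z|ℱ s]) ω ≤ b * m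
        rw [hR] at e1
        simp only [Pi.add_apply, Pi.sub_apply] at e1 e2 e3 e5 e6
        rw [e2, e3, e5, e6] at e1
        linarith
      set g : Ω → ℝ := fun ω => Ain k ω * φ' (max (V (X s ω)) 1) with hg
      have hg_sm : StronglyMeasurable[ℱ s] g := by
        have h1 : StronglyMeasurable[ℱ s] (Ain k) := by
          have hAs : MeasurableSet[ℱ s] A := hℱ_mono t1 s hs.1 A hAml
          exact stronglyMeasurable_const.indicator hAs
        have hanti' : Antitone fun u : ℝ => φ' (max u 1) := by
          intro u v huv
          exact hanti (Set.mem_Ici.2 (le_max_right _ _)) (Set.mem_Ici.2 (le_max_right _ _))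
            (max_le_max huv le_rfl)
        have hm0 : Measurable[ℱ s] fun ω => V (X s ω) := hV_meas.comp (hX_adapted s hs0)
        have h2 : Measurable[ℱ s] fun ω => φ' (max (V (X s ω)) 1) :=
          hanti'.measurable.comp hm0
        exact h1.mul h2.stronglyMeasurable
      have hg01 : ∀ ω, 0 ≤ g ω ∧ g ω ≤ φ' 1 := by
        intro ω
        have hmax1 : (1:ℝ) ≤ max (V (X s ω)) 1 := le_max_right _ _
        have h1 := hφ'nonneg hmax1
        have h2 := hφ'le hmax1
        have h3 := hAin01 k ω
        constructor
        · exact mul_nonneg h3.1 h1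
        · calc g ω ≤ 1 * φ' 1 := mul_le_mul h3.2 h2 h1 zero_le_one
            _ = φ' 1 := one_mul _
      have hg_aesm : AEStronglyMeasurable g μ := (hg_sm.mono (hℱ_le s)).aestronglyMeasurable
      have hg_bound : ∀ ω, ‖g ω‖ ≤ φ' 1 := fun ω => by
        rw [Real.norm_eq_abs, abs_of_nonneg (hg01 ω).1]; exact (hg01 ω).2
      have hgZ_int : Integrable (g * Z) μ := hZint.bdd_mul hg_aesm (Eventually.of_forall hg_bound)
      have hg_int : Integrable g μ :=
        (integrable_const (φ' 1)).mono' hg_aesm (Eventually.of_forall hg_bound)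
      have hpull : μ[g * Z|ℱ s] =ᵐ[μ] g * μ[Z|ℱ s] :=
        condExp_mul_of_stronglyMeasurable_left hg_sm hgZ_int hZint
      have hstep : (∫ ω, g ω * Z ω ∂μ) ≤ (b * m) * ∫ ω, g ω ∂μ := by
        calc (∫ ω, g ω * Z ω ∂μ) = ∫ ω, (g * Z) ω ∂μ := rfl
          _ = ∫ ω, (μ[g * Z|ℱ s]) ω ∂μ := (integral_condExp (hℱ_le s)).symm
          _ = ∫ ω, g ω * (μ[Z|ℱ s]) ω ∂μ :=
              integral_congr_ae (hpull.mono fun ω h => by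
                rw [h]; simp [Pi.mul_apply])
          _ ≤ ∫ ω, g ω * (b * m) ∂μ := by
              refine integral_mono_ae
                (integrable_condExp.bdd_mul hg_aesm (Eventually.of_forall hg_bound))
                (hg_int.mul_const _) ?_
              filter_upwards [hcond] with ω h
              exact mul_le_mul_of_nonneg_left h (hg01 ω).1
          _ = (b * m) * ∫ ω, g ω ∂μ := by
              rw [integral_mul_const]; ring
      have hint_t2 : Integrable (fun ω => Ain k ω * φ (V (X t2 ω))) μ :=
        (hφV_int t2 ht20).bdd_mul (hAin_meas k hk1).aestronglyMeasurable (c := 1)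
          (Eventually.of_forall fun ω => by rw [Real.norm_eq_abs, abs_of_nonneg (hAin01 k ω).1]; exact (hAin01 k ω).2)
      have hint_s : Integrable (fun ω => Ain k ω * φ (V (X s ω))) μ :=
        (hφV_int s hs0).bdd_mul (hAin_meas k hk1).aestronglyMeasurable (c := 1)
          (Eventually.of_forall fun ω => by rw [Real.norm_eq_abs, abs_of_nonneg (hAin01 k ω).1]; exact (hAin01 k ω).2)
      have hptwise : ∀ ω, Ain k ω * φ (V (X t2 ω)) ≤ Ain k ω * φ (V (X s ω)) + g ω * Z ω := by
        intro ω
        have ht := htan (hV_one (X s ω)) (hV_one (X t2 ω))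
        have hA0 := (hAin01 k ω).1
        have hgeq : g ω = Ain k ω * φ' (V (X s ω)) := by
          show Ain k ω * φ' (max (V (X s ω)) 1) = _
          rw [max_eq_left (hV_one _)]
        have hZeq : Z ω = V (X t2 ω) - V (X s ω) := rfl
        rw [hgeq, hZeq]
        nlinarith [mul_le_mul_of_nonneg_left ht hA0]
      have hgle : (∫ ω, g ω ∂μ) ≤ φ' 1 * ∫ ω, Ain k ω ∂μ := by
        have hpt : ∀ ω, g ω ≤ φ' 1 * Ain k ω := by
          intro ω
          have h3 := hAin01 k ω
          have h1m : (1:ℝ) ≤ max (V (X s ω)) 1 := le_max_right _ _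
          calc g ω = Ain k ω * φ' (max (V (X s ω)) 1) := rfl
            _ ≤ Ain k ω * φ' 1 := mul_le_mul_of_nonneg_left (hφ'le h1m) h3.1
            _ = φ' 1 * Ain k ω := mul_comm _ _
        calc (∫ ω, g ω ∂μ) ≤ ∫ ω, φ' 1 * Ain k ω ∂μ :=
              integral_mono_ae hg_int ((hAin_int k hk1).const_mul _)
                (Eventually.of_forall hpt)
          _ = φ' 1 * ∫ ω, Ain k ω ∂μ := integral_const_mul _ _
      have hbm0 : (0:ℝ) ≤ b * m := mul_nonneg hb hm.le
      have h5 : (b * m) * (∫ ω, g ω ∂μ) ≤ (b * m) * (φ' 1 * ∫ ω, Ain k ω ∂μ) :=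
        mul_le_mul_of_nonneg_left hgle hbm0
      have h6 : (b * m) * (φ' 1 * ∫ ω, Ain k ω ∂μ) = φ' 1 * (b * m) * ∫ ω, Ain k ω ∂μ := by
        ring
      calc (∫ ω, Ain k ω * φ (V (X t2 ω)) ∂μ)
          ≤ ∫ ω, (Ain k ω * φ (V (X s ω)) + g ω * Z ω) ∂μ :=
            integral_mono_ae hint_t2 (hint_s.add hgZ_int) (Eventually.of_forall hptwise)
        _ = (∫ ω, Ain k ω * φ (V (X s ω)) ∂μ) + ∫ ω, g ω * Z ω ∂μ :=
            integral_add hint_s hgZ_int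
        _ ≤ (∫ ω, Ain k ω * φ (V (X s ω)) ∂μ) + φ' 1 * (b * m) * ∫ ω, Ain k ω ∂μ := by
            have := hstep
            linarith [h5, h6]
    -- integrate claimA over s
    have hFkA' := hFkA k hk1 hkN
    have hvol_lt : volume (Set.Icc t1 t2) < ⊤ := by
      rw [Real.volume_Icc]; exact ENNReal.ofReal_lt_top
    have hvol : (volume (Set.Icc t1 t2)).toReal = m := by
      rw [Real.volume_Icc, ENNReal.toReal_ofReal (by linarith)]
      rw [ht1, ht2]; ring
    have hRHSint : IntegrableOn (fun s => ∫ ω, Ain k ω * φ (V (X s ω)) ∂μ)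
        (Set.Icc t1 t2) volume := hFkA'.integral_prod_left
    have h1 := setIntegral_mono_on
      (integrableOn_const hvol_lt.ne)
      (hRHSint.add (integrableOn_const hvol_lt.ne))
      measurableSet_Icc claimA
    have hLHSconst : (∫ _s in Set.Icc t1 t2, (∫ ω, Ain k ω * φ (V (X t2 ω)) ∂μ))
        = m * ∫ ω, Ain k ω * φ (V (X t2 ω)) ∂μ := by
      rw [setIntegral_const, measureReal_def, hvol, smul_eq_mul]
    have hswap : (∫ s in Set.Icc t1 t2, (∫ ω, Ain k ω * φ (V (X s ω)) ∂μ))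
        = ∫ ω, Ain k ω * (∫ s in Set.Icc t1 t2, φ (V (X s ω))) ∂μ := by
      have hsw := integral_integral_swap (f := fun s ω => Ain k ω * φ (V (X s ω)))
        (by exact hFkA')
      rw [hsw]
      congr 1
      funext ω
      show (∫ s in Set.Icc t1 t2, Ain k ω * φ (V (X s ω)))
          = Ain k ω * ∫ s in Set.Icc t1 t2, φ (V (X s ω))
      exact integral_const_mul _ _
    have hRHSeval : (∫ s in Set.Icc t1 t2,
          ((∫ ω, Ain k ω * φ (V (X s ω)) ∂μ) + φ' 1 * (b * m) * ∫ ω, Ain k ω ∂μ))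
        = (∫ ω, Ain k ω * (∫ s in Set.Icc t1 t2, φ (V (X s ω))) ∂μ)
          + m * (φ' 1 * (b * m) * ∫ ω, Ain k ω ∂μ) := by
      calc (∫ s in Set.Icc t1 t2,
          ((∫ ω, Ain k ω * φ (V (X s ω)) ∂μ) + φ' 1 * (b * m) * ∫ ω, Ain k ω ∂μ))
          = (∫ s in Set.Icc t1 t2, (∫ ω, Ain k ω * φ (V (X s ω)) ∂μ))
            + ∫ _s in Set.Icc t1 t2, (φ' 1 * (b * m) * ∫ ω, Ain k ω ∂μ) :=
            integral_add hRHSint (integrableOn_const hvol_lt.ne)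
        _ = (∫ ω, Ain k ω * (∫ s in Set.Icc t1 t2, φ (V (X s ω))) ∂μ)
            + m * (φ' 1 * (b * m) * ∫ ω, Ain k ω ∂μ) := by
            rw [setIntegral_const, measureReal_def, hvol, smul_eq_mul, hswap]
    calc m * (∫ ω, Ain k ω * φ (V (X t2 ω)) ∂μ)
        = ∫ _s in Set.Icc t1 t2, (∫ ω, Ain k ω * φ (V (X t2 ω)) ∂μ) := hLHSconst.symm
      _ ≤ ∫ s in Set.Icc t1 t2,
            ((∫ ω, Ain k ω * φ (V (X s ω)) ∂μ) + φ' 1 * (b * m) * ∫ ω, Ain k ω ∂μ) := h1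
      _ = (∫ ω, Ain k ω * (∫ s in Set.Icc t1 t2, φ (V (X s ω))) ∂μ)
          + m * (φ' 1 * (b * m) * ∫ ω, Ain k ω ∂μ) := hRHSeval
  -- rewriting the three integrals as finite sums
  have hAinφ_int : ∀ k ∈ Finset.Icc 1 N,
      Integrable (fun ω => Ain k ω * φ (V (X (m * (k:ℝ)) ω))) μ := by
    intro k hk
    obtain ⟨hk1, hkN⟩ := Finset.mem_Icc.1 hk
    have hk0 : (0:ℝ) ≤ m * (k:ℝ) := by positivity
    exact (hφV_int _ hk0).bdd_mul (hAin_meas k hk1).aestronglyMeasurable (c := 1)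
      (Eventually.of_forall fun ω => by rw [Real.norm_eq_abs, abs_of_nonneg (hAin01 k ω).1]; exact (hAin01 k ω).2)
  have hLHS : (∫ ω, (∑ k ∈ Finset.Icc 1 (TN ω), φ (V (X (m * k) ω))) ∂μ)
      = ∑ k ∈ Finset.Icc 1 N, ∫ ω, Ain k ω * φ (V (X (m * (k:ℝ)) ω)) ∂μ := by
    have hpt : ∀ ω, (∑ k ∈ Finset.Icc 1 (TN ω), φ (V (X (m * k) ω)))
        = ∑ k ∈ Finset.Icc 1 N, Ain k ω * φ (V (X (m * (k:ℝ)) ω)) := by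
      intro ω
      have hite : ∀ k : ℕ, Ain k ω * φ (V (X (m * (k:ℝ)) ω))
          = if k ≤ TN ω then φ (V (X (m * (k:ℝ)) ω)) else 0 := by
        intro k; rw [hAin_if]; split <;> simp
      simp_rw [hite]
      rw [← Finset.sum_filter, hfil ω]
    calc (∫ ω, (∑ k ∈ Finset.Icc 1 (TN ω), φ (V (X (m * k) ω))) ∂μ)
        = ∫ ω, (∑ k ∈ Finset.Icc 1 N, Ain k ω * φ (V (X (m * (k:ℝ)) ω))) ∂μ := by
          congr 1; funext ω; exact hpt ω
      _ = ∑ k ∈ Finset.Icc 1 N, ∫ ω, Ain k ω * φ (V (X (m * (k:ℝ)) ω)) ∂μ :=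
          integral_finset_sum _ hAinφ_int
  have hint2 : ∀ k ∈ Finset.Icc 1 N,
      Integrable (fun ω => Ain k ω *
        (∫ s in Set.Icc (m * ((k:ℝ) - 1)) (m * (k:ℝ)), φ (V (X s ω)))) μ := by
    intro k hk
    obtain ⟨hk1, hkN⟩ := Finset.mem_Icc.1 hk
    have h := (hFkA k hk1 hkN).integral_prod_right
    refine h.congr (Eventually.of_forall fun ω => ?_)
    show (∫ s in Set.Icc (m * ((k:ℝ) - 1)) (m * (k:ℝ)), Ain k ω * φ (V (X s ω)))
        = Ain k ω * ∫ s in Set.Icc (m * ((k:ℝ) - 1)) (m * (k:ℝ)), φ (V (X s ω))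
    exact integral_const_mul _ _
  have hETN : (∫ ω, ((TN ω : ℝ)) ∂μ) = ∑ k ∈ Finset.Icc 1 N, ∫ ω, Ain k ω ∂μ := by
    have hpt : ∀ ω, ((TN ω : ℝ)) = ∑ k ∈ Finset.Icc 1 N, Ain k ω := by
      intro ω
      simp_rw [hAin_if]
      rw [Finset.sum_boole]
      have hcard : (Finset.Icc 1 N).filter (fun k => k ≤ TN ω) = Finset.Icc 1 (TN ω) :=
        hfil ω
      rw [hcard, Nat.card_Icc]
      simp
    calc (∫ ω, ((TN ω : ℝ)) ∂μ) = ∫ ω, (∑ k ∈ Finset.Icc 1 N, Ain k ω) ∂μ := by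
          congr 1; funext ω; exact hpt ω
      _ = ∑ k ∈ Finset.Icc 1 N, ∫ ω, Ain k ω ∂μ :=
          integral_finset_sum _ fun k hk => hAin_int k (Finset.mem_Icc.1 hk).1
  have hRHS2 : (∫ ω, (∫ s in (0:ℝ)..(m * (TN ω : ℝ)), φ (V (X s ω))) ∂μ)
      = ∑ k ∈ Finset.Icc 1 N, ∫ ω, Ain k ω *
          (∫ s in Set.Icc (m * ((k:ℝ) - 1)) (m * (k:ℝ)), φ (V (X s ω))) ∂μ := by
    have hpt : ∀ᵐ ω ∂μ, (∫ s in (0:ℝ)..(m * (TN ω : ℝ)), φ (V (X s ω)))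
        = ∑ k ∈ Finset.Icc 1 N, Ain k ω *
            (∫ s in Set.Icc (m * ((k:ℝ) - 1)) (m * (k:ℝ)), φ (V (X s ω))) := by
      filter_upwards [hpath] with ω hω
      have hii : ∀ a c : ℝ, 0 ≤ a → a ≤ c → c ≤ m * N →
          IntervalIntegrable (fun u => φ (V (X u ω))) volume a c := by
        intro a c ha hac hc
        rw [intervalIntegrable_iff, Set.uIoc_of_le hac]
        exact hω.mono_set fun u hu => ⟨ha.trans hu.1.le, hu.2.trans hc⟩
      have key : ∀ n : ℕ, n ≤ N → (∫ s in (0:ℝ)..(m * (n:ℝ)), φ (V (X s ω)))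
          = ∑ k ∈ Finset.Icc 1 n,
              (∫ s in Set.Icc (m * ((k:ℝ) - 1)) (m * (k:ℝ)), φ (V (X s ω))) := by
        intro n hn
        induction n with
        | zero => simp
        | succ p ih =>
          have hp : p ≤ N := by omega
          have hpR : (0:ℝ) ≤ m * (p:ℝ) := by positivity
          have hcast : (((p+1 : ℕ)):ℝ) = (p:ℝ) + 1 := by push_cast; ring
          have hle1 : m * (p:ℝ) ≤ m * ((p:ℝ) + 1) :=
            mul_le_mul_of_nonneg_left (by linarith) hm.le
          have hle2 : m * ((p:ℝ) + 1) ≤ m * (N:ℝ) := by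
            apply mul_le_mul_of_nonneg_left _ hm.le
            have : (p:ℝ) + 1 ≤ (N:ℝ) := by exact_mod_cast hn
            exact this
          have h1 := hii 0 (m * (p:ℝ)) le_rfl hpR (hle1.trans hle2)
          have h2 := hii (m * (p:ℝ)) (m * ((p:ℝ) + 1)) hpR hle1 hle2
          have hterm : (∫ s in (m * (p:ℝ))..(m * ((p:ℝ) + 1)), φ (V (X s ω)))
              = ∫ s in Set.Icc (m * ((((p+1:ℕ)):ℝ) - 1)) (m * (((p+1:ℕ)):ℝ)),
                  φ (V (X s ω)) := by
            rw [intervalIntegral.integral_of_le hle1, ← integral_Icc_eq_integral_Ioc, hcast]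
            norm_num
          rw [hcast, ← intervalIntegral.integral_add_adjacent_intervals h1 h2, ih hp,
            Finset.sum_Icc_succ_top (by omega : 1 ≤ p + 1), hterm, hcast]
      have hTNc := key (TN ω) (hTN_le ω)
      rw [hTNc]
      have hite : ∀ k : ℕ, Ain k ω *
          (∫ s in Set.Icc (m * ((k:ℝ) - 1)) (m * (k:ℝ)), φ (V (X s ω)))
          = if k ≤ TN ω then
              (∫ s in Set.Icc (m * ((k:ℝ) - 1)) (m * (k:ℝ)), φ (V (X s ω))) else 0 := by
        intro k; rw [hAin_if]; split <;> simp
      simp_rw [hite]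
      rw [← Finset.sum_filter, hfil ω]
    rw [integral_congr_ae hpt]
    exact integral_finset_sum _ hint2
  -- put everything together
  rw [hLHS, hETN, hRHS2]
  have hperk : ∀ k ∈ Finset.Icc 1 N,
      (∫ ω, Ain k ω * φ (V (X (m * (k:ℝ)) ω)) ∂μ)
        ≤ m⁻¹ * (∫ ω, Ain k ω *
            (∫ s in Set.Icc (m * ((k:ℝ) - 1)) (m * (k:ℝ)), φ (V (X s ω))) ∂μ)
          + b * φ' 1 * m * ∫ ω, Ain k ω ∂μ := by
    intro k hk
    obtain ⟨hk1, hkN⟩ := Finset.mem_Icc.1 hk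
    have h := hkey k hk1 hkN
    have hinv : (0:ℝ) ≤ m⁻¹ := inv_nonneg.2 hm.le
    calc (∫ ω, Ain k ω * φ (V (X (m * (k:ℝ)) ω)) ∂μ)
        = m⁻¹ * (m * ∫ ω, Ain k ω * φ (V (X (m * (k:ℝ)) ω)) ∂μ) := by
          rw [← mul_assoc, inv_mul_cancel₀ hm.ne', one_mul]
      _ ≤ m⁻¹ * ((∫ ω, Ain k ω *
            (∫ s in Set.Icc (m * ((k:ℝ) - 1)) (m * (k:ℝ)), φ (V (X s ω))) ∂μ)
          + m * (φ' 1 * (b * m) * ∫ ω, Ain k ω ∂μ)) := mul_le_mul_of_nonneg_left h hinv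
      _ = m⁻¹ * (∫ ω, Ain k ω *
            (∫ s in Set.Icc (m * ((k:ℝ) - 1)) (m * (k:ℝ)), φ (V (X s ω))) ∂μ)
          + m⁻¹ * (m * (φ' 1 * (b * m) * ∫ ω, Ain k ω ∂μ)) := by ring
      _ = m⁻¹ * (∫ ω, Ain k ω *
            (∫ s in Set.Icc (m * ((k:ℝ) - 1)) (m * (k:ℝ)), φ (V (X s ω))) ∂μ)
          + b * φ' 1 * m * ∫ ω, Ain k ω ∂μ := by
          rw [← mul_assoc m⁻¹ m, inv_mul_cancel₀ hm.ne', one_mul]; ring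
  calc (∑ k ∈ Finset.Icc 1 N, ∫ ω, Ain k ω * φ (V (X (m * (k:ℝ)) ω)) ∂μ)
      ≤ ∑ k ∈ Finset.Icc 1 N,
          (m⁻¹ * (∫ ω, Ain k ω *
            (∫ s in Set.Icc (m * ((k:ℝ) - 1)) (m * (k:ℝ)), φ (V (X s ω))) ∂μ)
          + b * φ' 1 * m * ∫ ω, Ain k ω ∂μ) := Finset.sum_le_sum hperk
    _ = m⁻¹ * (∑ k ∈ Finset.Icc 1 N, ∫ ω, Ain k ω *
            (∫ s in Set.Icc (m * ((k:ℝ) - 1)) (m * (k:ℝ)), φ (V (X s ω))) ∂μ)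
        + b * φ' 1 * m * ∑ k ∈ Finset.Icc 1 N, ∫ ω, Ain k ω ∂μ := by
        rw [Finset.sum_add_distrib, ← Finset.mul_sum, ← Finset.mul_sum]
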